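/- arXiv:2503.06432 — 2 statements merged into one kernel-verified Lean document; each statement's English description precedes it below -/
import Mathlib

section
/- Let a ∈ ℝ and let 𝔔′ ⊆ 𝔓 be an intersecting subset such that B(α_P, α_Q) = a for all distinct P, Q ∈ 𝔔′. Then |𝔔′| ≤ |S| + 1. -/
noncomputable section

namespace PaperBound

variable {B : Type} {W : Type} [Group W]

/-- The value `B(α_i, α_j)` of the canonical symmetric bilinear form on simple roots:
`-cos (π / m i j)` if `m i j ≠ ∞` (encoded as `M i j ≠ 0`) and `-1` otherwise. -/
def cB (M : CoxeterMatrix B) (i j : B) : ℝ :=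
  if M i j = 0 then -1 else - Real.cos (Real.pi / (M i j : ℝ))

/-- The canonical symmetric bilinear form on `V = B → ℝ` (coordinates in the basis of
simple roots `Δ = {α_i}`). -/
def bform [Fintype B] (M : CoxeterMatrix B) (u v : B → ℝ) : ℝ :=
  ∑ i, ∑ j, u i * v j * cB M i j

/-- The natural pairing `⟨-,-⟩ : V* × V → ℝ`, where both `V` and `V*` are modelled as
`B → ℝ` (coordinates of `V*` taken in the dual basis of `Δ`). -/
def pair [Fintype B] (f v : B → ℝ) : ℝ := ∑ i, f i * v i

/-- The simple root `α_i ∈ V`. -/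
def sroot [DecidableEq B] (i : B) : B → ℝ := Pi.single i 1

/-- `ρ` is the geometric representation of `W` on `V = B → ℝ`:
`s_i · v = v - 2 B(α_i, v) α_i`. -/
def IsGeomRep [Fintype B] [DecidableEq B] (M : CoxeterMatrix B) (cs : CoxeterSystem M W)
    (ρ : W →* (B → ℝ) ≃ₗ[ℝ] (B → ℝ)) : Prop :=
  ∀ (i : B) (v : B → ℝ), ρ (cs.simple i) v = v - (2 * bform M (sroot i) v) • sroot i

/-- `π` is the contragredient representation of `W` on `V* = B → ℝ`:
`⟨w·f, w·v⟩ = ⟨f, v⟩`. -/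
def IsContraRep [Fintype B] (ρ : W →* (B → ℝ) ≃ₗ[ℝ] (B → ℝ))
    (π : W →* (B → ℝ) ≃ₗ[ℝ] (B → ℝ)) : Prop :=
  ∀ (w : W) (f v : B → ℝ), pair (π w f) (ρ w v) = pair f v

/-- The set `Φ⁺` of positive roots: roots (elements of the orbit of the simple roots)
all of whose coordinates in the basis `Δ` are nonnegative. -/
def PhiPos [Fintype B] [DecidableEq B] (ρ : W →* (B → ℝ) ≃ₗ[ℝ] (B → ℝ)) : Set (B → ℝ) :=
  {α | (∃ (w : W) (i : B), α = ρ w (sroot i)) ∧ ∀ j, 0 ≤ α j}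

/-- The hyperplane `H_α = {f ∈ V* : ⟨f, α⟩ = 0}`. -/
def hyp [Fintype B] (α : B → ℝ) : Set (B → ℝ) := {f | pair f α = 0}

/-- The set `𝔓 = {H_α : α ∈ Φ⁺}` of hyperplanes. -/
def Planes [Fintype B] [DecidableEq B] (ρ : W →* (B → ℝ) ≃ₗ[ℝ] (B → ℝ)) :
    Set (Set (B → ℝ)) :=
  {H | ∃ α ∈ PhiPos (W := W) ρ, H = hyp α}

/-- The (open) dominant chamber `C = {f ∈ V* : ⟨f, α_i⟩ > 0 for all i}`. -/
def domCham (B : Type) [Fintype B] [DecidableEq B] : Set (B → ℝ) :=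
  {f | ∀ i : B, 0 < pair f (sroot i)}

/-- The Tits cone `U = ⋃_{w ∈ W} w · (closure of C)`. -/
def titsCone [Fintype B] [DecidableEq B] (π : W →* (B → ℝ) ≃ₗ[ℝ] (B → ℝ)) :
    Set (B → ℝ) :=
  ⋃ w : W, (π w) '' closure (domCham B)

/-- `A ⩀ B := A ∩ B ∩ U°`, where `U°` is the interior of the Tits cone. -/
def dcap [Fintype B] [DecidableEq B] (π : W →* (B → ℝ) ≃ₗ[ℝ] (B → ℝ))
    (A A' : Set (B → ℝ)) : Set (B → ℝ) :=
  A ∩ A' ∩ interior (titsCone π)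

/-- A set `𝔔` of hyperplanes is intersecting if `H₁ ⩀ H₂ ≠ ∅` for all `H₁, H₂ ∈ 𝔔`. -/
def Intersecting [Fintype B] [DecidableEq B] (π : W →* (B → ℝ) ≃ₗ[ℝ] (B → ℝ))
    (Q : Set (Set (B → ℝ))) : Prop :=
  ∀ H₁ ∈ Q, ∀ H₂ ∈ Q, (dcap π H₁ H₂).Nonempty

/-- The chamber `wC ⊆ V*`. -/
def cham [Fintype B] [DecidableEq B] (π : W →* (B → ℝ) ≃ₗ[ℝ] (B → ℝ)) (w : W) :
    Set (B → ℝ) :=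
  (π w) '' domCham B

/-- The hyperplane with root `α` separates `f, g ∈ V*`: `⟨f, α⟩⟨g, α⟩ < 0`. -/
def SepPt [Fintype B] (α f g : B → ℝ) : Prop := pair f α * pair g α < 0

/-- The hyperplane with root `α` separates the subsets `A, A'` of `V*`: every point of
`A ∪ A'` lies off the hyperplane, and every point of `A` is separated from every point
of `A'`. -/
def SepSets [Fintype B] (α : B → ℝ) (A A' : Set (B → ℝ)) : Prop :=
  (∀ f ∈ A ∪ A', pair f α ≠ 0) ∧ ∀ f ∈ A, ∀ g ∈ A', SepPt α f g

/-- The subset `A ⊆ V*` lies entirely on one side of the hyperplane with root `α`. -/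
def OneSide [Fintype B] (α : B → ℝ) (A : Set (B → ℝ)) : Prop :=
  (∀ f ∈ A, pair f α ≠ 0) ∧ ∀ f ∈ A, ∀ g ∈ A, ¬ SepPt α f g

/-- The hyperplane `H ∈ 𝔓` separates the subsets `A, A'` of `V*` (expressed via a
positive root `α` with `H = H_α`; this does not depend on the choice of `α`). -/
def SepSetsH [Fintype B] [DecidableEq B] (ρ : W →* (B → ℝ) ≃ₗ[ℝ] (B → ℝ))
    (H : Set (B → ℝ)) (A A' : Set (B → ℝ)) : Prop :=
  ∃ α ∈ PhiPos (W := W) ρ, H = hyp α ∧ SepSets α A A'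


/-- The open half-space bounded by the hyperplane with root `α` on the side not containing
the chamber `wC`. -/
def halfNeg [Fintype B] [DecidableEq B] (π : W →* (B → ℝ) ≃ₗ[ℝ] (B → ℝ)) (w : W)
    (α : B → ℝ) : Set (B → ℝ) :=
  {f | ∀ f₀ ∈ cham π w, pair f α * pair f₀ α < 0}

/-- Auxiliary recursion producing the sets `𝔄_i` (first component) together with the
cumulative unions `𝔄₀ ∪ ⋯ ∪ 𝔄_i` (second component), starting from `𝔄₀ = A0`:
`𝔄_{i+1} = {P ∈ Q ∖ (𝔄₀ ∪ ⋯ ∪ 𝔄_i) : P ⩀ σ(R) = ∅ for some R ∈ 𝔄_i}`. -/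
def AseqAux [Fintype B] [DecidableEq B] (π : W →* (B → ℝ) ≃ₗ[ℝ] (B → ℝ))
    (Q : Set (Set (B → ℝ))) (σ : W) (A0 : Set (Set (B → ℝ))) :
    ℕ → Set (Set (B → ℝ)) × Set (Set (B → ℝ))
  | 0 => (A0, A0)
  | i + 1 =>
    let prev := AseqAux π Q σ A0 i
    ({P | P ∈ Q ∧ P ∉ prev.2 ∧ ∃ R ∈ prev.1, dcap π P ((π σ) '' R) = ∅},
      prev.2 ∪ {P | P ∈ Q ∧ P ∉ prev.2 ∧ ∃ R ∈ prev.1, dcap π P ((π σ) '' R) = ∅})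

/-- The set `𝔄_i`. -/
def Aseq [Fintype B] [DecidableEq B] (π : W →* (B → ℝ) ≃ₗ[ℝ] (B → ℝ))
    (Q : Set (Set (B → ℝ))) (σ : W) (A0 : Set (Set (B → ℝ))) (i : ℕ) :
    Set (Set (B → ℝ)) :=
  (AseqAux π Q σ A0 i).1

section Words

variable {M : CoxeterMatrix B}

/-- The element `x′_n = x s₁ ⋯ ŝ_{i₁} ⋯ ŝ_{i_{n−1}} ⋯ s_{i_n − 1}`: the product of `x` and
the first `i_n - 1` letters of the word `ω`, with the letters at positions `i₁, …, i_{n−1}`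
omitted. (Positions are recorded `0`-based: the index `ι n : Fin ω.length` corresponds to
the letter `s_{i_{n+1}}` of the paper.) -/
def omitProd (cs : CoxeterSystem M W) (x : W) (ω : List B) {p : ℕ}
    (ι : Fin p → Fin ω.length) (n : Fin p) : W :=
  x * cs.wordProd (((List.finRange ω.length).filter
      (fun j : Fin ω.length => decide ((j : ℕ) < (ι n : ℕ) ∧ ∀ m : Fin p, m < n → j ≠ ι m))).map ω.get)

/-- The condition `ℓ(x′_n s_{i_n}) < ℓ(x′_n)` for all `n = 1, …, p`. -/
def DescCond (cs : CoxeterSystem M W) (x : W) (ω : List B) {p : ℕ}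
    (ι : Fin p → Fin ω.length) : Prop :=
  ∀ n : Fin p, cs.length (omitProd cs x ω ι n * cs.simple (ω.get (ι n))) <
    cs.length (omitProd cs x ω ι n)

/-- The element `x_n := x s₁ ⋯ s_{i_n − 1}`. -/
def xseq (cs : CoxeterSystem M W) (x : W) (ω : List B) {p : ℕ}
    (ι : Fin p → Fin ω.length) (n : Fin p) : W :=
  x * cs.wordProd (ω.take (ι n))

/-- The reflection `σ_n := x_n s_{i_n} x_n⁻¹`. -/
def sigmaseq (cs : CoxeterSystem M W) (x : W) (ω : List B) {p : ℕ}
    (ι : Fin p → Fin ω.length) (n : Fin p) : W :=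
  xseq cs x ω ι n * cs.simple (ω.get (ι n)) * (xseq cs x ω ι n)⁻¹

/-- The element `e_n := σ_n σ_{n−1} ⋯ σ₁`, with `e₀ = e`. -/
def eseq (cs : CoxeterSystem M W) (x : W) (ω : List B) {p : ℕ}
    (ι : Fin p → Fin ω.length) : ℕ → W
  | 0 => 1
  | n + 1 => (if h : n < p then sigmaseq cs x ω ι ⟨n, h⟩ else 1) * eseq cs x ω ι n

/-- A root of the hyperplane `H_n` corresponding to the reflection `σ_n`, namely
`x_n · α_{s_{i_n}}`. -/
def rootseq [Fintype B] [DecidableEq B] (cs : CoxeterSystem M W)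
    (ρ : W →* (B → ℝ) ≃ₗ[ℝ] (B → ℝ)) (x : W) (ω : List B) {p : ℕ}
    (ι : Fin p → Fin ω.length) (n : Fin p) : B → ℝ :=
  ρ (xseq cs x ω ι n) (sroot (ω.get (ι n)))

/-- The hyperplane `H_n ∈ 𝔓` corresponding to the reflection `σ_n`. -/
def Hseq [Fintype B] [DecidableEq B] (cs : CoxeterSystem M W)
    (ρ : W →* (B → ℝ) ≃ₗ[ℝ] (B → ℝ)) (x : W) (ω : List B) {p : ℕ}
    (ι : Fin p → Fin ω.length) (n : Fin p) : Set (B → ℝ) :=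
  hyp (rootseq cs ρ x ω ι n)

end Words


/-! ### Auxiliary development -/

section Aux

variable [Fintype B] [DecidableEq B] {M : CoxeterMatrix B}

lemma pair_sroot (f : B → ℝ) (i : B) : pair f (sroot i) = f i := by
  unfold pair sroot
  rw [Finset.sum_eq_single i]
  · simp
  · intro b _ hb; simp [Pi.single_apply, hb]
  · intro h; exact absurd (Finset.mem_univ i) h

lemma pair_nonneg {f v : B → ℝ} (hf : ∀ i, 0 ≤ f i) (hv : ∀ i, 0 ≤ v i) :
    0 ≤ pair f v :=
  Finset.sum_nonneg fun i _ => mul_nonneg (hf i) (hv i)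

lemma pair_add_right (f u v : B → ℝ) : pair f (u + v) = pair f u + pair f v := by
  unfold pair
  rw [← Finset.sum_add_distrib]
  congr 1; funext i; simp [mul_add]

lemma pair_smul_right (f : B → ℝ) (c : ℝ) (v : B → ℝ) : pair f (c • v) = c * pair f v := by
  unfold pair
  rw [Finset.mul_sum]
  congr 1; funext i; simp [Pi.smul_apply]; ring

lemma pair_sub_left (f g v : B → ℝ) : pair (f - g) v = pair f v - pair g v := by
  unfold pair
  rw [← Finset.sum_sub_distrib]
  congr 1; funext i; simp [sub_mul]

lemma pair_smul_left (c : ℝ) (f v : B → ℝ) : pair (c • f) v = c * pair f v := by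
  unfold pair
  rw [Finset.mul_sum]
  congr 1; funext i; simp; ring

lemma pair_neg_right (f v : B → ℝ) : pair f (-v) = - pair f v := by
  unfold pair; rw [← Finset.sum_neg_distrib]; congr 1; funext i; simp

/-- `cB` is symmetric. -/
lemma cB_symm (i j : B) : cB M i j = cB M j i := by
  unfold cB; rw [M.symmetric i j]

lemma cB_diag (i : B) : cB M i i = 1 := by
  unfold cB
  rw [M.diagonal i]
  norm_num

/-- Bilinearity of `bform`. -/
lemma bform_add_left (u v w : B → ℝ) : bform M (u + v) w = bform M u w + bform M v w := by
  unfold bform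
  rw [← Finset.sum_add_distrib]
  congr 1; funext i
  rw [← Finset.sum_add_distrib]
  congr 1; funext j
  simp [add_mul]

lemma bform_smul_left (c : ℝ) (u w : B → ℝ) : bform M (c • u) w = c * bform M u w := by
  unfold bform
  rw [Finset.mul_sum]
  congr 1; funext i
  rw [Finset.mul_sum]
  congr 1; funext j
  simp; ring

lemma bform_neg_left (u w : B → ℝ) : bform M (-u) w = - bform M u w := by
  have := bform_smul_left (M := M) (-1) u w
  simpa using this

lemma bform_sub_left (u v w : B → ℝ) : bform M (u - v) w = bform M u w - bform M v w := by
  rw [sub_eq_add_neg, bform_add_left, bform_neg_left, sub_eq_add_neg]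

lemma bform_symm (u v : B → ℝ) : bform M u v = bform M v u := by
  unfold bform
  rw [Finset.sum_comm]
  congr 1; funext i
  congr 1; funext j
  rw [cB_symm]; ring

lemma bform_add_right (u v w : B → ℝ) : bform M u (v + w) = bform M u v + bform M u w := by
  rw [bform_symm, bform_add_left, bform_symm (M := M) v u, bform_symm (M := M) w u]

lemma bform_smul_right (c : ℝ) (u w : B → ℝ) : bform M u (c • w) = c * bform M u w := by
  rw [bform_symm, bform_smul_left, bform_symm (M := M) w u]

lemma bform_sub_right (u v w : B → ℝ) : bform M u (v - w) = bform M u v - bform M u w := by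
  rw [bform_symm, bform_sub_left, bform_symm (M := M) v u, bform_symm (M := M) w u]

lemma bform_sroot_sroot (i j : B) : bform M (sroot i) (sroot j) = cB M i j := by
  unfold bform sroot
  rw [Finset.sum_eq_single i]
  · rw [Finset.sum_eq_single j]
    · simp
    · intro b _ hb; simp [Pi.single_apply, hb]
    · intro h; exact absurd (Finset.mem_univ j) h
  · intro b _ hb
    apply Finset.sum_eq_zero
    intro c _
    simp [Pi.single_apply, hb]
  · intro h; exact absurd (Finset.mem_univ i) h

lemma sroot_ne_zero (i : B) : sroot (B := B) i ≠ 0 := by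
  intro h
  have : (sroot (B := B) i) i = 0 := by rw [h]; rfl
  unfold sroot at this
  simp at this

end Aux
set_option linter.unusedSectionVars false

section Rep

variable [Fintype B] [DecidableEq B] {M : CoxeterMatrix B}
variable {cs : CoxeterSystem M W} {ρ : W →* (B → ℝ) ≃ₗ[ℝ] (B → ℝ)}

lemma rho_mul_apply (ρ : W →* (B → ℝ) ≃ₗ[ℝ] (B → ℝ)) (w₁ w₂ : W) (v : B → ℝ) :
    ρ (w₁ * w₂) v = ρ w₁ (ρ w₂ v) := by
  rw [map_mul]; rfl

lemma rho_one_apply (ρ : W →* (B → ℝ) ≃ₗ[ℝ] (B → ℝ)) (v : B → ℝ) : ρ 1 v = v := by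
  rw [map_one]; rfl

lemma rho_inv_apply (ρ : W →* (B → ℝ) ≃ₗ[ℝ] (B → ℝ)) (w : W) (v : B → ℝ) :
    ρ w (ρ w⁻¹ v) = v := by
  rw [← rho_mul_apply, mul_inv_cancel, rho_one_apply]

lemma rho_inv_apply' (ρ : W →* (B → ℝ) ≃ₗ[ℝ] (B → ℝ)) (w : W) (v : B → ℝ) :
    ρ w⁻¹ (ρ w v) = v := by
  rw [← rho_mul_apply, inv_mul_cancel, rho_one_apply]

variable (hρ : IsGeomRep M cs ρ)
include hρ

lemma rho_simple_sroot (i j : B) :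
    ρ (cs.simple i) (sroot j) = sroot j - (2 * cB M i j) • sroot i := by
  rw [hρ i (sroot j), bform_sroot_sroot]

lemma rho_simple_sroot_self (i : B) :
    ρ (cs.simple i) (sroot i) = - sroot i := by
  rw [rho_simple_sroot hρ, cB_diag]
  module

/-- The form is invariant under a simple reflection. -/
lemma bform_rho_simple (i : B) (u v : B → ℝ) :
    bform M (ρ (cs.simple i) u) (ρ (cs.simple i) v) = bform M u v := by
  rw [hρ i u, hρ i v]
  simp only [bform_sub_left, bform_sub_right, bform_smul_left, bform_smul_right,
    bform_sroot_sroot, cB_diag]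
  rw [bform_symm (M := M) (sroot i) u, bform_symm (M := M) (sroot i) v]
  ring

/-- The form is `W`-invariant. -/
lemma bform_rho (w : W) (u v : B → ℝ) :
    bform M (ρ w u) (ρ w v) = bform M u v := by
  induction w using cs.simple_induction_left with
  | one => rw [rho_one_apply, rho_one_apply]
  | mul_simple_left w i ih =>
      rw [rho_mul_apply, rho_mul_apply, bform_rho_simple hρ, ih]

end Rep
/-- Chebyshev-like sequence. -/
def cheb (C : ℝ) : ℕ → ℝ
  | 0 => 0
  | 1 => 1
  | (n+2) => 2*C*cheb C (n+1) - cheb C n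

lemma cheb_sin {m : ℕ} (hm : 2 ≤ m) (l : ℕ) :
    cheb (Real.cos (Real.pi/m)) l * Real.sin (Real.pi/m) = Real.sin (l * (Real.pi/m)) := by
  set θ := Real.pi/m with hθ
  induction l using Nat.twoStepInduction with
  | zero => simp [cheb]
  | one => simp [cheb]
  | more n ih1 ih2 =>
      have h2 : ((n+2 : ℕ) : ℝ) * θ = ((n+1 : ℕ) : ℝ)*θ + θ := by push_cast; ring
      have h0 : ((n : ℕ) : ℝ) * θ = ((n+1 : ℕ) : ℝ)*θ - θ := by push_cast; ring
      calc cheb (Real.cos θ) (n+2) * Real.sin θ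
          = 2*Real.cos θ*(cheb (Real.cos θ) (n+1) * Real.sin θ)
            - cheb (Real.cos θ) n * Real.sin θ := by rw [cheb]; ring
        _ = 2*Real.cos θ*Real.sin (((n+1:ℕ):ℝ)*θ) - Real.sin (((n:ℕ):ℝ)*θ) := by
            rw [ih2, ih1]
        _ = Real.sin (((n+2:ℕ):ℝ)*θ) := by
            rw [h2, h0, Real.sin_add, Real.sin_sub]; ring

lemma cheb_nonneg_of_cos {m : ℕ} (hm : 2 ≤ m) {l : ℕ} (hl : l ≤ m) :
    0 ≤ cheb (Real.cos (Real.pi/m)) l := by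
  have hmpos : (0:ℝ) < m := by positivity
  have hθpos : 0 < Real.pi/m := by positivity
  have hθlt : Real.pi/m < Real.pi := by
    rw [div_lt_iff₀ hmpos]
    have h2m : (2:ℝ) ≤ (m:ℝ) := by exact_mod_cast hm
    nlinarith [Real.pi_pos]
  have hsin : 0 < Real.sin (Real.pi/m) := Real.sin_pos_of_pos_of_lt_pi hθpos hθlt
  have hsl : 0 ≤ Real.sin (l * (Real.pi/m)) := by
    apply Real.sin_nonneg_of_nonneg_of_le_pi
    · positivity
    · calc (l:ℝ) * (Real.pi/m) ≤ (m:ℝ) * (Real.pi/m) := by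
            apply mul_le_mul_of_nonneg_right _ (le_of_lt hθpos)
            exact_mod_cast hl
        _ = Real.pi := by field_simp
  nlinarith [cheb_sin hm l (m := m)]

lemma cheb_one (l : ℕ) : cheb 1 l = l := by
  induction l using Nat.twoStepInduction with
  | zero => simp [cheb]
  | one => simp [cheb]
  | more n ih1 ih2 => rw [cheb, ih1, ih2]; push_cast; ring

section Fold

variable [Fintype B] [DecidableEq B] {M : CoxeterMatrix B}
variable (cs : CoxeterSystem M W)

open CoxeterSystem

/-- One step of folding a word over `{i, j}` into an alternating word. -/
lemma fold_cons (i j : B) (u : W) (k : ℕ) (hk : M i j ≠ 0 → k ≤ M i j)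
    (hu : u = cs.wordProd (alternatingWord i j k) ∨ u = cs.wordProd (alternatingWord j i k)) :
    ∃ k', k' ≤ k + 1 ∧ (M i j ≠ 0 → k' ≤ M i j) ∧
      (cs.simple i * u = cs.wordProd (alternatingWord i j k') ∨
        cs.simple i * u = cs.wordProd (alternatingWord j i k')) := by
  match k with
  | 0 =>
      have hu1 : u = 1 := by
        rcases hu with h | h <;> simpa [alternatingWord] using h
      refine ⟨1, by omega, fun h => Nat.one_le_iff_ne_zero.mpr h, Or.inr ?_⟩
      rw [hu1, mul_one]
      have : alternatingWord j i 1 = [i] := rfl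
      rw [this, cs.wordProd_singleton]
  | (k''+1) =>
      rcases hu with hA | hB
      · by_cases hev : Even k''
        · -- first letter of `alternatingWord i j (k''+1)` is j; prepend i
          by_cases hover : M i j ≠ 0 ∧ M i j = k'' + 1
          · -- fold using the braid relation
            obtain ⟨hM0, hMk⟩ := hover
            have hbraid : cs.wordProd (alternatingWord i j (k''+1)) =
                cs.wordProd (alternatingWord j i (k''+1)) := by
              have := cs.wordProd_braidWord_eq i j
              unfold CoxeterSystem.braidWord at this
              rw [M.symmetric j i] at this
              rwa [hMk] at this
            have hfirst : alternatingWord j i (k''+1) = i :: alternatingWord j i k'' := by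
              rw [alternatingWord_succ' j i k'', if_pos hev]
            refine ⟨k'', by omega, fun h => by omega, Or.inr ?_⟩
            rw [hA, hbraid, hfirst, cs.wordProd_cons, cs.simple_mul_simple_cancel_left]
          · -- no overflow
            have hfirst : alternatingWord i j (k''+2) = i :: alternatingWord i j (k''+1) := by
              rw [alternatingWord_succ' i j (k''+1), if_neg (by simp [Nat.even_add_one, hev])]
            refine ⟨k''+2, by omega, fun h => ?_, Or.inl ?_⟩
            · rcases Nat.lt_or_ge (k''+1) (M i j) with h' | h'
              · omega
              · exfalso; exact hover ⟨h, by have := hk h; omega⟩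
            · rw [hA, hfirst, cs.wordProd_cons]
        · -- first letter of `alternatingWord i j (k''+1)` is i; cancel
          have hfirst : alternatingWord i j (k''+1) = i :: alternatingWord i j k'' := by
            rw [alternatingWord_succ' i j k'', if_neg hev]
          refine ⟨k'', by omega, fun h => by have := hk h; omega, Or.inl ?_⟩
          rw [hA, hfirst, cs.wordProd_cons, cs.simple_mul_simple_cancel_left]
      · by_cases hev : Even k''
        · -- first letter of `alternatingWord j i (k''+1)` is i; cancel
          have hfirst : alternatingWord j i (k''+1) = i :: alternatingWord j i k'' := by
            rw [alternatingWord_succ' j i k'', if_pos hev]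
          refine ⟨k'', by omega, fun h => by have := hk h; omega, Or.inr ?_⟩
          rw [hB, hfirst, cs.wordProd_cons, cs.simple_mul_simple_cancel_left]
        · -- first letter is j; prepend i
          by_cases hover : M i j ≠ 0 ∧ M i j = k'' + 1
          · obtain ⟨hM0, hMk⟩ := hover
            have hbraid : cs.wordProd (alternatingWord j i (k''+1)) =
                cs.wordProd (alternatingWord i j (k''+1)) := by
              have := cs.wordProd_braidWord_eq j i
              unfold CoxeterSystem.braidWord at this
              rw [M.symmetric j i] at this
              rwa [hMk] at this
            have hfirst : alternatingWord i j (k''+1) = i :: alternatingWord i j k'' := by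
              rw [alternatingWord_succ' i j k'', if_neg hev]
            refine ⟨k'', by omega, fun h => by omega, Or.inl ?_⟩
            rw [hB, hbraid, hfirst, cs.wordProd_cons, cs.simple_mul_simple_cancel_left]
          · have hfirst : alternatingWord j i (k''+2) = i :: alternatingWord j i (k''+1) := by
              rw [alternatingWord_succ' j i (k''+1), if_pos (by simp [Nat.even_add_one, hev])]
            refine ⟨k''+2, by omega, fun h => ?_, Or.inr ?_⟩
            · rcases Nat.lt_or_ge (k''+1) (M i j) with h' | h'
              · omega
              · exfalso; exact hover ⟨h, by have := hk h; omega⟩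
            · rw [hB, hfirst, cs.wordProd_cons]

/-- Folding: every word over `{i, j}` represents the same element as an alternating word
of no greater length, which can be chosen of length at most `M i j` if `M i j ≠ 0`. -/
lemma fold (ω : List B) : ∀ i j : B, (∀ l ∈ ω, l = i ∨ l = j) →
    ∃ k, k ≤ ω.length ∧ (M i j ≠ 0 → k ≤ M i j) ∧
      (cs.wordProd ω = cs.wordProd (alternatingWord i j k) ∨
        cs.wordProd ω = cs.wordProd (alternatingWord j i k)) := by
  induction ω with
  | nil =>
      intro i j _
      exact ⟨0, le_refl 0, fun _ => Nat.zero_le _, Or.inl (by simp [alternatingWord])⟩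
  | cons l ω ih =>
      intro i j hmem
      have hmem' : ∀ l' ∈ ω, l' = i ∨ l' = j :=
        fun l' hl' => hmem l' (List.mem_cons_of_mem _ hl')
      rcases hmem l (List.mem_cons_self) with rfl | rfl
      · obtain ⟨k, hk_le, hk_bound, hk_or⟩ := ih l j hmem'
        obtain ⟨k', h1, h2, h3⟩ := fold_cons cs l j (cs.wordProd ω) k hk_bound hk_or
        refine ⟨k', by simp only [List.length_cons]; omega, h2, ?_⟩
        rwa [cs.wordProd_cons]
      · obtain ⟨k, hk_le, hk_bound, hk_or⟩ := ih i l hmem'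
        obtain ⟨k', h1, h2, h3⟩ := fold_cons cs l i (cs.wordProd ω) k
          (by rw [M.symmetric l i]; exact hk_bound) hk_or.symm
        refine ⟨k', by simp only [List.length_cons]; omega,
          by rw [M.symmetric i l]; exact h2, ?_⟩
        rw [cs.wordProd_cons]
        exact h3.symm

end Fold
section PosDef

variable [Fintype B] [DecidableEq B]

/-- All coordinates nonnegative. -/
def Pos (v : B → ℝ) : Prop := ∀ l, 0 ≤ v l

lemma pos_sroot (i : B) : Pos (sroot (B := B) i) := by
  intro l
  unfold sroot
  rw [Pi.single_apply]
  split <;> norm_num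

lemma pos_combo {p q : ℝ} (hp : 0 ≤ p) (hq : 0 ≤ q) {x y : B → ℝ}
    (hx : Pos x) (hy : Pos y) : Pos (p • x + q • y) := by
  intro l
  have := hx l; have := hy l
  simp only [Pi.add_apply, Pi.smul_apply, smul_eq_mul]
  nlinarith

lemma pos_neg_eq_zero {v : B → ℝ} (h1 : Pos v) (h2 : Pos (-v)) : v = 0 := by
  funext l
  have := h1 l; have := h2 l
  simp only [Pi.neg_apply, Pi.zero_apply] at *
  linarith

end PosDef

section RhoAlt

open CoxeterSystem

variable [Fintype B] [DecidableEq B] {M : CoxeterMatrix B}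
variable {cs : CoxeterSystem M W} {ρ : W →* (B → ℝ) ≃ₗ[ℝ] (B → ℝ)}
variable (hρ : IsGeomRep M cs ρ)
include hρ

lemma rho_alt (i j : B) (hij : i ≠ j) (r : ℕ) :
    ρ (cs.wordProd (alternatingWord i j r)) (sroot i) =
      (cheb (-cB M i j) (if Even r then r+1 else r)) • sroot i +
        (cheb (-cB M i j) (if Even r then r else r+1)) • sroot j := by
  induction r with
  | zero =>
      simp only [if_pos (Even.zero)]
      have : cs.wordProd (alternatingWord i j 0) = 1 := by simp [alternatingWord]
      rw [this, rho_one_apply]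
      show _ = cheb (-cB M i j) 1 • sroot i + cheb (-cB M i j) 0 • sroot j
      rw [show cheb (-cB M i j) 1 = 1 from rfl, show cheb (-cB M i j) 0 = 0 from rfl]
      module
  | succ r ih =>
      rw [alternatingWord_succ' i j r, cs.wordProd_cons, rho_mul_apply, ih]
      by_cases hev : Even r
      · simp only [if_pos hev] at ih ⊢
        have hev' : ¬ Even (r+1) := by simp [Nat.even_add_one, hev]
        rw [if_neg hev', if_neg hev', map_add, map_smul, map_smul,
          rho_simple_sroot_self hρ j, rho_simple_sroot hρ j i]
        have hch : cheb (-cB M i j) (r+2) =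
            2*(-cB M i j)*cheb (-cB M i j) (r+1) - cheb (-cB M i j) r := rfl
        rw [show (r+1)+1 = r+2 from rfl, hch, cB_symm (M := M) j i]
        module
      · simp only [if_neg hev] at ih ⊢
        have hev' : Even (r+1) := Nat.even_add_one.mpr hev
        rw [if_pos hev', if_pos hev', map_add, map_smul, map_smul,
          rho_simple_sroot_self hρ i, rho_simple_sroot hρ i j]
        have hch : cheb (-cB M i j) (r+2) =
            2*(-cB M i j)*cheb (-cB M i j) (r+1) - cheb (-cB M i j) r := rfl
        rw [show (r+1)+1 = r+2 from rfl, hch]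
        module

/-- Nonnegativity of the coefficients, given no overflow. -/
lemma pos_rho_alt (i j : B) (hij : i ≠ j) (r : ℕ) (hr : M i j = 0 ∨ r + 1 ≤ M i j) :
    Pos (ρ (cs.wordProd (alternatingWord i j r)) (sroot i)) := by
  have hcheb : ∀ l : ℕ, l ≤ r + 1 → 0 ≤ cheb (-cB M i j) l := by
    intro l hl
    rcases hr with h0 | hle
    · have : cB M i j = -1 := by unfold cB; rw [if_pos h0]
      rw [this]
      norm_num
      rw [cheb_one]
      positivity
    · have hM0 : M i j ≠ 0 := by omega
      have hM1 : M i j ≠ 1 := M.off_diagonal i j hij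
      have hm2 : 2 ≤ M i j := by omega
      have : cB M i j = - Real.cos (Real.pi / (M i j : ℝ)) := by unfold cB; rw [if_neg hM0]
      rw [this, neg_neg]
      exact cheb_nonneg_of_cos hm2 (by omega)
  rw [rho_alt hρ i j hij r]
  apply pos_combo _ _ (pos_sroot i) (pos_sroot j)
  · split <;> [exact hcheb _ (by omega); exact hcheb _ (by omega)]
  · split <;> [exact hcheb _ (by omega); exact hcheb _ (by omega)]

/-- Elements of the dihedral subgroup preserve the span of the two simple roots. -/
lemma rho_span (ω : List B) (i j : B) (hmem : ∀ l ∈ ω, l = i ∨ l = j) :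
    ∃ p q : ℝ, ρ (cs.wordProd ω) (sroot i) = p • sroot i + q • sroot j := by
  induction ω with
  | nil =>
      exact ⟨1, 0, by rw [cs.wordProd_nil, rho_one_apply]; module⟩
  | cons l ω ih =>
      obtain ⟨p, q, h⟩ := ih (fun l' hl' => hmem l' (List.mem_cons_of_mem _ hl'))
      rw [cs.wordProd_cons, rho_mul_apply, h, map_add, map_smul, map_smul]
      rcases hmem l (List.mem_cons_self) with rfl | rfl
      · refine ⟨-p + q * (-(2 * cB M l j)), q, ?_⟩
        rw [rho_simple_sroot_self hρ l, rho_simple_sroot hρ l j]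
        module
      · refine ⟨p, -q + p * (-(2 * cB M l i)), ?_⟩
        rw [rho_simple_sroot_self hρ l, rho_simple_sroot hρ l i]
        module

end RhoAlt
section MainPos

open CoxeterSystem

variable [Fintype B] [DecidableEq B] {M : CoxeterMatrix B}
variable {cs : CoxeterSystem M W} {ρ : W →* (B → ℝ) ≃ₗ[ℝ] (B → ℝ)}
variable (hρ : IsGeomRep M cs ρ)
include hρ

/-- The key positivity theorem: if `ℓ(w sᵢ) > ℓ(w)` then `w · αᵢ` is a nonnegative
combination of simple roots. -/
theorem pos_rho_of_ascent : ∀ (n : ℕ) (w : W) (i : B), cs.length w = n →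
    cs.length (w * cs.simple i) = cs.length w + 1 → Pos (ρ w (sroot i)) := by
  intro n
  induction n using Nat.strong_induction_on with
  | _ n ih =>
  intro w i hn hasc
  rcases eq_or_ne w 1 with rfl | hw
  · rw [rho_one_apply]; exact pos_sroot i
  obtain ⟨j, hj⟩ := cs.exists_rightDescent_of_ne_one hw
  unfold CoxeterSystem.IsRightDescent at hj
  have hdesc : cs.length (w * cs.simple j) + 1 = cs.length w := by
    rcases cs.length_mul_simple w j with h | h
    · omega
    · exact h
  have hij : i ≠ j := by
    rintro rfl; omega
  classical
  -- the set of lengths of candidate prefixes `v`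
  have hex : ∃ nn : ℕ, ∃ v : W, ∃ ω : List B, cs.length v = nn ∧
      (∀ l ∈ ω, l = i ∨ l = j) ∧ w = v * cs.wordProd ω ∧
      cs.length w = cs.length v + ω.length := by
    refine ⟨cs.length (w * cs.simple j), w * cs.simple j, [j], rfl, by simp, ?_, ?_⟩
    · rw [cs.wordProd_singleton, cs.simple_mul_simple_cancel_right]
    · simp only [List.length_singleton]; omega
  obtain ⟨v, ω, hvlen, hmem, hw_eq, hlen_add⟩ := Nat.find_spec hex
  have hnv_le : Nat.find hex ≤ cs.length (w * cs.simple j) := Nat.find_le (by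
    refine ⟨w * cs.simple j, [j], rfl, by simp, ?_, ?_⟩
    · rw [cs.wordProd_singleton, cs.simple_mul_simple_cancel_right]
    · simp only [List.length_singleton]; omega)
  have hvltw : cs.length v < cs.length w := by omega
  -- `v` has ascents at both `i` and `j`
  have hasc_v : ∀ t : B, (t = i ∨ t = j) → cs.length (v * cs.simple t) = cs.length v + 1 := by
    intro t ht
    rcases cs.length_mul_simple v t with h | h
    · exact h
    · exfalso
      have hnew : ∃ v' : W, ∃ ω' : List B, cs.length v' = cs.length (v * cs.simple t) ∧
          (∀ l ∈ ω', l = i ∨ l = j) ∧ w = v' * cs.wordProd ω' ∧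
          cs.length w = cs.length v' + ω'.length := by
        refine ⟨v * cs.simple t, t :: ω, rfl, ?_, ?_, ?_⟩
        · intro l hl
          rcases List.mem_cons.mp hl with rfl | hl'
          · exact ht
          · exact hmem l hl'
        · rw [cs.wordProd_cons, ← mul_assoc, cs.simple_mul_simple_cancel_right, hw_eq]
        · simp only [List.length_cons]; omega
      have := Nat.find_min hex (m := cs.length (v * cs.simple t)) (by omega) hnew
      exact this
  set u := cs.wordProd ω with hu_def
  have hulen : cs.length u = ω.length := by
    have h1 : cs.length u ≤ ω.length := cs.length_wordProd_le ω
    have h2 := cs.length_mul_le v u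
    rw [← hw_eq] at h2
    omega
  have husc : cs.length (u * cs.simple i) = cs.length u + 1 := by
    have h3 : w * cs.simple i = v * (u * cs.simple i) := by rw [hw_eq, mul_assoc]
    have h4 := cs.length_mul_le v (u * cs.simple i)
    rw [← h3] at h4
    rcases cs.length_mul_simple u i with h | h
    · exact h
    · omega
  rcases Nat.eq_zero_or_pos (cs.length v) with hv0 | hvpos
  · -- rank-2 case: `w = u` is a product of a word over `{i, j}` of length `ℓ(w)`
    have hv1 : v = 1 := cs.length_eq_zero_iff.mp hv0
    have hwω : w = cs.wordProd ω := by rw [hw_eq, hv1, one_mul]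
    have hωlen : cs.length w = ω.length := by omega
    obtain ⟨k, hk_le, hk_bound, hk_or⟩ := fold cs ω i j hmem
    have hwk : cs.length w ≤ k := by
      rcases hk_or with h | h
      · rw [hwω, h]
        calc cs.length (cs.wordProd (alternatingWord i j k)) ≤
              (alternatingWord i j k).length := cs.length_wordProd_le _
          _ = k := length_alternatingWord i j k
      · rw [hwω, h]
        calc cs.length (cs.wordProd (alternatingWord j i k)) ≤
              (alternatingWord j i k).length := cs.length_wordProd_le _
          _ = k := length_alternatingWord j i k
    have hk_eq : k = ω.length := by omega
    -- rule out the normal form ending with the letter `i`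
    have hnotB : ¬ (w = cs.wordProd (alternatingWord j i k)) := by
      intro hB
      rcases Nat.eq_zero_or_pos k with hk0 | hkpos
      · -- then w = 1, contradiction
        apply hw
        rw [hB, hk0]
        simp [alternatingWord]
      · obtain ⟨k', rfl⟩ : ∃ k', k = k' + 1 := ⟨k - 1, by omega⟩
        have hsplit : alternatingWord j i (k' + 1) = (alternatingWord i j k').concat i :=
          alternatingWord_succ j i k'
        have : w * cs.simple i = cs.wordProd (alternatingWord i j k') := by
          rw [hB, hsplit, cs.wordProd_concat, cs.simple_mul_simple_cancel_right]
        have hle : cs.length (w * cs.simple i) ≤ k' := by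
          rw [this]
          calc cs.length (cs.wordProd (alternatingWord i j k')) ≤
                (alternatingWord i j k').length := cs.length_wordProd_le _
            _ = k' := length_alternatingWord i j k'
        omega
    have hA : w = cs.wordProd (alternatingWord i j k) := by
      rcases hk_or with h | h
      · rw [hwω]; exact h
      · exact absurd (by rw [hwω]; exact h) hnotB
    have hk_lt : M i j = 0 ∨ k + 1 ≤ M i j := by
      by_contra h'
      push_neg at h'
      obtain ⟨hM0, hMk⟩ := h'
      have hkM : k = M i j := by have := hk_bound hM0; omega
      apply hnotB
      rw [hA, hkM]
      have := cs.wordProd_braidWord_eq i j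
      unfold CoxeterSystem.braidWord at this
      rw [M.symmetric j i] at this
      exact this
    rw [hA]
    exact pos_rho_alt hρ i j hij k hk_lt
  · -- inductive case: `v ≠ 1`
    have hωpos : 0 < ω.length := by
      by_contra h'
      push_neg at h'
      omega
    have hu_lt : cs.length u < cs.length w := by omega
    have hPosU : Pos (ρ u (sroot i)) := ih (cs.length u) (by omega) u i rfl husc
    obtain ⟨p, q, hpq⟩ := rho_span hρ ω i j hmem
    rw [← hu_def] at hpq
    have hval : ∀ t : B, (p • sroot t + q • sroot j) t = p * (sroot (B := B) t t) + q * (sroot (B := B) j t) := by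
      intro t; simp [Pi.add_apply, Pi.smul_apply]
    have hp : 0 ≤ p := by
      have := hPosU i
      rw [hpq] at this
      simpa [sroot, Pi.single_apply, hij, Ne.symm hij] using this
    have hq : 0 ≤ q := by
      have := hPosU j
      rw [hpq] at this
      simpa [sroot, Pi.single_apply, hij, Ne.symm hij] using this
    have hvi_pos : Pos (ρ v (sroot i)) :=
      ih (cs.length v) (by omega) v i rfl (hasc_v i (Or.inl rfl))
    have hvj_pos : Pos (ρ v (sroot j)) :=
      ih (cs.length v) (by omega) v j rfl (hasc_v j (Or.inr rfl))
    have hfin : ρ w (sroot i) = p • ρ v (sroot i) + q • ρ v (sroot j) := by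
      rw [hw_eq, rho_mul_apply, hpq, map_add, map_smul, map_smul]
    rw [hfin]
    exact pos_combo hp hq hvi_pos hvj_pos

/-- Dichotomy: every root is positive or negative. -/
theorem rho_dichotomy (w : W) (i : B) :
    Pos (ρ w (sroot i)) ∨ Pos (-(ρ w (sroot i))) := by
  rcases cs.length_mul_simple w i with h | h
  · exact Or.inl (pos_rho_of_ascent hρ (cs.length w) w i rfl h)
  · right
    have h2 : cs.length ((w * cs.simple i) * cs.simple i) =
        cs.length (w * cs.simple i) + 1 := by
      rw [cs.simple_mul_simple_cancel_right]; omega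
    have := pos_rho_of_ascent hρ (cs.length (w * cs.simple i)) (w * cs.simple i) i rfl h2
    have heq : ρ (w * cs.simple i) (sroot i) = -(ρ w (sroot i)) := by
      rw [rho_mul_apply, rho_simple_sroot_self hρ i, map_neg]
    rwa [heq] at this
  
end MainPos
section Roots

variable [Fintype B] [DecidableEq B] {M : CoxeterMatrix B}
variable {cs : CoxeterSystem M W} {ρ : W →* (B → ℝ) ≃ₗ[ℝ] (B → ℝ)}

/-- `γ` is a root. -/
def IsRootV (ρ : W →* (B → ℝ) ≃ₗ[ℝ] (B → ℝ)) (γ : B → ℝ) : Prop :=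
  ∃ (w : W) (i : B), γ = ρ w (sroot i)

lemma mem_phiPos_iff (γ : B → ℝ) : γ ∈ PhiPos (W := W) ρ ↔ IsRootV ρ γ ∧ Pos γ :=
  Iff.rfl

variable (hρ : IsGeomRep M cs ρ)
include hρ

lemma isRootV_neg {γ : B → ℝ} (h : IsRootV ρ γ) : IsRootV ρ (-γ) := by
  obtain ⟨w, i, rfl⟩ := h
  exact ⟨w * cs.simple i, i, by
    rw [rho_mul_apply, rho_simple_sroot_self hρ i, map_neg]⟩

lemma bform_root_self {γ : B → ℝ} (h : IsRootV ρ γ) : bform M γ γ = 1 := by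
  obtain ⟨w, i, rfl⟩ := h
  rw [bform_rho hρ, bform_sroot_sroot, cB_diag]

lemma root_ne_zero {γ : B → ℝ} (h : IsRootV ρ γ) : γ ≠ 0 := by
  intro h0
  have h1 := bform_root_self hρ h
  rw [h0] at h1
  have h2 := bform_smul_left (M := M) 0 0 (0 : B → ℝ)
  rw [zero_smul, zero_mul] at h2
  rw [h2] at h1
  norm_num at h1

lemma root_dichotomy {γ : B → ℝ} (h : IsRootV ρ γ) : Pos γ ∨ Pos (-γ) := by
  obtain ⟨w, i, rfl⟩ := h
  exact rho_dichotomy hρ w i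

lemma eq_sroot_of_not_pos {γ : B → ℝ} (hγ : γ ∈ PhiPos (W := W) ρ) (i : B)
    (h : ¬ Pos (ρ (cs.simple i) γ)) : γ = sroot i := by
  obtain ⟨⟨w', l, hwl⟩, hγpos⟩ := hγ
  have hroot2 : IsRootV ρ (ρ (cs.simple i) γ) :=
    ⟨cs.simple i * w', l, by rw [rho_mul_apply, hwl]⟩
  have hneg : Pos (-(ρ (cs.simple i) γ)) := (root_dichotomy hρ hroot2).resolve_left h
  have hval : ∀ t, ρ (cs.simple i) γ t = γ t - (2 * bform M (sroot i) γ) * (sroot (B := B) i t) := by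
    intro t
    rw [hρ i γ]
    simp [Pi.sub_apply, Pi.smul_apply]
  have hcoords : ∀ t, t ≠ i → γ t = 0 := by
    intro t ht
    have h1 := hγpos t
    have h2 := hneg t
    rw [Pi.neg_apply, hval t] at h2
    unfold sroot at h2
    rw [Pi.single_apply, if_neg (by exact ht)] at h2
    simp at h2
    linarith
  have hγi : γ = γ i • sroot i := by
    funext t
    by_cases ht : t = i
    · subst ht
      simp [sroot, Pi.smul_apply, Pi.single_apply]
    · rw [hcoords t ht]
      simp [sroot, Pi.smul_apply, Pi.single_apply, ht]
  have hnorm : bform M γ γ = 1 := bform_root_self hρ ⟨w', l, hwl⟩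
  rw [hγi, bform_smul_left, bform_smul_right, bform_sroot_sroot, cB_diag, mul_one] at hnorm
  have hγipos : 0 ≤ γ i := hγpos i
  have : γ i = 1 := by nlinarith
  rw [hγi, this, one_smul]

/-- The set of positive roots made negative by `w⁻¹` is finite. -/
theorem finite_neg_set : ∀ (n : ℕ) (w : W), cs.length w = n →
    {γ : B → ℝ | γ ∈ PhiPos (W := W) ρ ∧ ¬ Pos (ρ w⁻¹ γ)}.Finite := by
  intro n
  induction n using Nat.strong_induction_on with
  | _ n ih =>
  intro w hn
  rcases eq_or_ne w 1 with rfl | hw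
  · apply Set.Finite.subset (Set.finite_empty)
    rintro γ ⟨hγ, hneg⟩
    exfalso
    apply hneg
    rw [inv_one, rho_one_apply]
    exact hγ.2
  obtain ⟨j, hj⟩ := cs.exists_rightDescent_of_ne_one hw
  unfold CoxeterSystem.IsRightDescent at hj
  have hdesc : cs.length (w * cs.simple j) + 1 = cs.length w := by
    rcases cs.length_mul_simple w j with h | h
    · omega
    · exact h
  have hfin' := ih (cs.length (w * cs.simple j)) (by omega) (w * cs.simple j) rfl
  apply Set.Finite.subset (hfin'.insert (ρ (w * cs.simple j) (sroot j)))
  rintro γ ⟨hγ, hneg⟩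
  by_cases h' : Pos (ρ (w * cs.simple j)⁻¹ γ)
  · left
    have hkey : ρ w⁻¹ γ = ρ (cs.simple j) (ρ (w * cs.simple j)⁻¹ γ) := by
      rw [← rho_mul_apply]
      congr 1
      rw [mul_inv_rev, cs.inv_simple, ← mul_assoc, cs.simple_mul_simple_self, one_mul]
    set η := ρ (w * cs.simple j)⁻¹ γ with hη
    have hηroot : IsRootV ρ η := by
      obtain ⟨⟨wγ, l, hwl⟩, _⟩ := hγ
      exact ⟨(w * cs.simple j)⁻¹ * wγ, l, by rw [rho_mul_apply, ← hwl]⟩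
    have hηPhi : η ∈ PhiPos (W := W) ρ := ⟨hηroot, h'⟩
    have hηnotpos : ¬ Pos (ρ (cs.simple j) η) := by rwa [← hkey]
    have hηs : η = sroot j := eq_sroot_of_not_pos hρ hηPhi j hηnotpos
    have : γ = ρ (w * cs.simple j) (sroot j) := by
      rw [← hηs, hη, rho_inv_apply]
    exact this
  · right
    exact ⟨hγ, h'⟩

/-- Only finitely many positive roots vanish at an interior point of the Tits cone. -/
theorem finite_vanishing (π : W →* (B → ℝ) ≃ₗ[ℝ] (B → ℝ)) (hπ : IsContraRep ρ π)
    (f : B → ℝ) (hf : f ∈ interior (titsCone π)) :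
    {γ : B → ℝ | γ ∈ PhiPos (W := W) ρ ∧ pair f γ = 0}.Finite := by
  have hnb : titsCone π ∈ nhds f := mem_interior_iff_mem_nhds.mp hf
  obtain ⟨ε, hε, hball⟩ := Metric.mem_nhds_iff.mp hnb
  set g : B → ℝ := fun _ => (1 : ℝ) with hg
  set f' : B → ℝ := f - (ε/2) • g with hf'def
  have hf' : f' ∈ titsCone π := by
    apply hball
    rw [Metric.mem_ball]
    have hle : dist f' f ≤ ε/2 := by
      apply dist_pi_le_iff (by positivity) |>.mpr
      intro b
      have : f' b = f b - ε/2 := by simp [hf'def, hg]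
      rw [Real.dist_eq, this]
      simp [abs_of_nonneg (by positivity : (0:ℝ) ≤ ε/2)]
    linarith
  obtain ⟨w, hw⟩ := Set.mem_iUnion.mp hf'
  obtain ⟨h, hh, hfeq⟩ := (Set.mem_image _ _ _).mp hw
  have hh_nonneg : ∀ l, 0 ≤ h l := by
    have hcl : closure (domCham B) ⊆ {x : B → ℝ | ∀ l, 0 ≤ x l} := by
      apply closure_minimal
      · intro x hx l
        have := hx l
        rw [pair_sroot] at this
        exact le_of_lt this
      · have : {x : B → ℝ | ∀ l, 0 ≤ x l} = ⋂ l, {x : B → ℝ | 0 ≤ x l} := by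
          ext x; simp [Set.mem_iInter]
        rw [this]
        exact isClosed_iInter fun l => isClosed_le continuous_const (continuous_apply l)
    exact hcl hh
  apply Set.Finite.subset (finite_neg_set hρ (cs.length w) w rfl)
  rintro γ ⟨hγ, hvan⟩
  refine ⟨hγ, ?_⟩
  intro hPos
  have hpair : pair f' γ = pair h (ρ w⁻¹ γ) := by
    conv_lhs => rw [← hfeq, ← rho_inv_apply ρ w γ]
    exact hπ w h (ρ w⁻¹ γ)
  have hsum : 0 < pair g γ := by
    have hPosγ : Pos γ := hγ.2
    have hne : γ ≠ 0 := root_ne_zero hρ hγ.1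
    obtain ⟨l0, hl0⟩ : ∃ l, γ l ≠ 0 := by
      by_contra hcon
      push_neg at hcon
      exact hne (funext fun l => hcon l)
    apply Finset.sum_pos'
    · intro l _
      have := hPosγ l
      simp only [hg, one_mul]
      linarith
    · exact ⟨l0, Finset.mem_univ _, by
        have h1 := hPosγ l0
        simp only [hg, one_mul]
        cases lt_or_eq_of_le h1 with
        | inl h => exact h
        | inr h => exact absurd h.symm hl0⟩
  have hlt : pair f' γ < 0 := by
    rw [hf'def, pair_sub_left, pair_smul_left, hvan]
    nlinarith
  have hge : 0 ≤ pair h (ρ w⁻¹ γ) := pair_nonneg hh_nonneg hPos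
  linarith

end Roots
section AOne

variable [Fintype B] [DecidableEq B] {M : CoxeterMatrix B}
variable {cs : CoxeterSystem M W} {ρ : W →* (B → ℝ) ≃ₗ[ℝ] (B → ℝ)}

lemma pair_sub_right [Fintype B] (f u v : B → ℝ) :
    pair f (u - v) = pair f u - pair f v := by
  rw [sub_eq_add_neg, pair_add_right, pair_neg_right, sub_eq_add_neg]

lemma bform_zero_right (u : B → ℝ) : bform M u 0 = 0 := by
  have h := bform_smul_right (M := M) 0 u (0 : B → ℝ)
  rw [zero_smul, zero_mul] at h
  exact h

variable (hρ : IsGeomRep M cs ρ)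
include hρ

lemma rho_reflection (x : W) (i : B) (v : B → ℝ) :
    ρ (x * cs.simple i * x⁻¹) v
      = v - (2 * bform M (ρ x (sroot i)) v) • (ρ x (sroot i)) := by
  rw [rho_mul_apply, rho_mul_apply, hρ i, map_sub, map_smul, rho_inv_apply]
  have hb : bform M (sroot i) (ρ x⁻¹ v) = bform M (ρ x (sroot i)) v := by
    have h := bform_rho hρ x (sroot i) (ρ x⁻¹ v)
    rw [rho_inv_apply] at h
    exact h.symm
  rw [hb]

/-- If two distinct positive roots pair to `1`, no point of the interior of the Tits cone
lies on both hyperplanes. -/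
lemma no_common_point_of_bform_one (π : W →* (B → ℝ) ≃ₗ[ℝ] (B → ℝ)) (hπ : IsContraRep ρ π)
    {α β : B → ℝ} (hα : α ∈ PhiPos (W := W) ρ) (hβ : β ∈ PhiPos (W := W) ρ) (hne : α ≠ β)
    (hab : bform M α β = 1) {f : B → ℝ} (hfα : pair f α = 0) (hfβ : pair f β = 0)
    (hf : f ∈ interior (titsCone π)) : False := by
  classical
  obtain ⟨⟨wa, ia, hwa⟩, hposα⟩ := hα
  obtain ⟨⟨wb, ib, hwb⟩, hposβ⟩ := hβ
  have hαroot : IsRootV ρ α := ⟨wa, ia, hwa⟩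
  have hβroot : IsRootV ρ β := ⟨wb, ib, hwb⟩
  have hαα : bform M α α = 1 := bform_root_self hρ hαroot
  have hββ : bform M β β = 1 := bform_root_self hρ hβroot
  have hβα : bform M β α = 1 := by rw [bform_symm]; exact hab
  set δ : B → ℝ := β - α with hδdef
  have hαδ : bform M α δ = 0 := by rw [hδdef, bform_sub_right, hab, hαα, sub_self]
  have hβδ : bform M β δ = 0 := by rw [hδdef, bform_sub_right, hββ, hβα, sub_self]
  have hδ0 : δ ≠ 0 := sub_ne_zero_of_ne (Ne.symm hne)
  set rα : W := wa * cs.simple ia * wa⁻¹ with hrαdef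
  set rβ : W := wb * cs.simple ib * wb⁻¹ with hrβdef
  have hrα : ∀ v, ρ rα v = v - (2 * bform M α v) • α := by
    intro v
    rw [hrαdef, rho_reflection hρ, ← hwa]
  have hrβ : ∀ v, ρ rβ v = v - (2 * bform M β v) • β := by
    intro v
    rw [hrβdef, rho_reflection hρ, ← hwb]
  set σ : W := rβ * rα with hσdef
  have hσ : ∀ n : ℕ, ρ (σ^n) α = α + (2*(n:ℝ)) • δ := by
    intro n
    induction n with
    | zero =>
        rw [pow_zero, rho_one_apply]
        push_cast
        module
    | succ n ihn =>
        rw [pow_succ', rho_mul_apply, ihn, hσdef, rho_mul_apply]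
        have h1 : bform M α (α + (2*(n:ℝ)) • δ) = 1 := by
          rw [bform_add_right, bform_smul_right, hαα, hαδ, mul_zero, add_zero]
        have h2 : ρ rα (α + (2*(n:ℝ)) • δ) = -α + (2*(n:ℝ)) • δ := by
          rw [hrα, h1]
          module
        rw [h2]
        have h3 : bform M β (-α + (2*(n:ℝ)) • δ) = -1 := by
          rw [bform_add_right, bform_smul_right,
            show bform M β (-α) = - bform M β α from by
              rw [bform_symm, bform_neg_left, bform_symm],
            hβα, hβδ, mul_zero, add_zero]
        rw [hrβ, h3]
        have hβeq : β = δ + α := by rw [hδdef]; module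
        rw [hβeq]
        push_cast
        module
  have hroot : ∀ n : ℕ, IsRootV ρ (α + (2*(n:ℝ)) • δ) := by
    intro n
    exact ⟨σ^n * wa, ia, by rw [rho_mul_apply, ← hwa, hσ n]⟩
  have hfδ : pair f δ = 0 := by
    rw [hδdef, pair_sub_right, hfα, hfβ, sub_self]
  have hvan : ∀ n : ℕ, pair f (α + (2*(n:ℝ)) • δ) = 0 := by
    intro n
    rw [pair_add_right, pair_smul_right, hfα, hfδ, mul_zero, add_zero]
  set F : ℕ → (B → ℝ) := fun n =>
    if Pos (α + (2*(n:ℝ)) • δ) then α + (2*(n:ℝ)) • δ else -(α + (2*(n:ℝ)) • δ) with hF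
  have hFmem : ∀ n, F n ∈ {γ : B → ℝ | γ ∈ PhiPos (W := W) ρ ∧ pair f γ = 0} := by
    intro n
    by_cases hp : Pos (α + (2*(n:ℝ)) • δ)
    · rw [hF]
      simp only [if_pos hp]
      exact ⟨⟨hroot n, hp⟩, hvan n⟩
    · rw [hF]
      simp only [if_neg hp]
      refine ⟨⟨isRootV_neg hρ (hroot n), ?_⟩, ?_⟩
      · exact (root_dichotomy hρ (hroot n)).resolve_left hp
      · rw [pair_neg_right, hvan n, neg_zero]
  have hkey : ∀ n m : ℕ, F n = F m → n = m := by
    intro n m hnm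
    have hcases : (α + (2*(n:ℝ)) • δ) = (α + (2*(m:ℝ)) • δ) ∨
        (α + (2*(n:ℝ)) • δ) = -(α + (2*(m:ℝ)) • δ) := by
      rw [hF] at hnm
      by_cases h1 : Pos (α + (2*(n:ℝ)) • δ) <;> by_cases h2 : Pos (α + (2*(m:ℝ)) • δ) <;>
        simp only [if_pos, if_neg, h1, h2] at hnm
      · exact Or.inl hnm
      · exact Or.inr hnm
      · exact Or.inr (neg_eq_iff_eq_neg.mp hnm)
      · exact Or.inl (by have := neg_injective hnm; exact this)
    rcases hcases with he | he
    · have : (2*(n:ℝ) - 2*(m:ℝ)) • δ = 0 := by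
        have := sub_eq_zero_of_eq he
        rw [show α + (2*(n:ℝ)) • δ - (α + (2*(m:ℝ)) • δ) = (2*(n:ℝ) - 2*(m:ℝ)) • δ from by
          module] at this
        exact this
      rcases smul_eq_zero.mp this with hc | hc
      · have : (n:ℝ) = (m:ℝ) := by linarith [hc]
        exact_mod_cast this
      · exact absurd hc hδ0
    · exfalso
      have hsum : (2:ℝ) • α + (2*(n:ℝ) + 2*(m:ℝ)) • δ = 0 := by
        have := sub_eq_zero_of_eq he
        rw [show α + (2*(n:ℝ)) • δ - -(α + (2*(m:ℝ)) • δ)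
            = (2:ℝ) • α + (2*(n:ℝ) + 2*(m:ℝ)) • δ from by module] at this
        exact this
      have hb := congrArg (bform M α) hsum
      rw [bform_add_right, bform_smul_right, bform_smul_right, hαα, hαδ,
        bform_zero_right] at hb
      norm_num at hb
  have hinf : {γ : B → ℝ | γ ∈ PhiPos (W := W) ρ ∧ pair f γ = 0}.Infinite :=
    Set.infinite_of_injective_forall_mem hkey hFmem
  exact hinf (finite_vanishing hρ π hπ f hf)

end AOne
section Assembly

variable [Fintype B] [DecidableEq B] {M : CoxeterMatrix B}

/-- `bform` in the second variable, as a linear map. -/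
def bformL (M : CoxeterMatrix B) (x : B → ℝ) : (B → ℝ) →ₗ[ℝ] ℝ where
  toFun := fun y => bform M x y
  map_add' := fun y z => bform_add_right x y z
  map_smul' := fun c y => by simp [bform_smul_right]

lemma finrank_pi_real : Module.finrank ℝ (B → ℝ) = Fintype.card B := by
  simp [Module.finrank_pi]

end Assembly
/-- an intersecting subset `𝔔′ ⊆ 𝔓` such that `B(α_P, α_Q) = a` for all
distinct `P, Q ∈ 𝔔′` has cardinality at most `|S| + 1`. -/
theorem statement3 [Fintype B] [DecidableEq B] {M : CoxeterMatrix B}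
    (cs : CoxeterSystem M W) (ρ π : W →* (B → ℝ) ≃ₗ[ℝ] (B → ℝ))
    (hρ : IsGeomRep M cs ρ) (hπ : IsContraRep ρ π)
    (a : ℝ) (Q : Set (Set (B → ℝ))) (hQP : Q ⊆ Planes ρ) (hint : Intersecting π Q)
    (ha : ∀ P ∈ Q, ∀ P' ∈ Q, P ≠ P' →
      ∀ α ∈ PhiPos ρ, ∀ β ∈ PhiPos ρ, P = hyp α → P' = hyp β → bform M α β = a) :
    Q.Finite ∧ Q.ncard ≤ Fintype.card B + 1 := by
  classical
  by_cases hsub : Q.Subsingleton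
  · refine ⟨hsub.finite, ?_⟩
    rcases hsub.eq_empty_or_singleton with rfl | ⟨x, rfl⟩
    · simp
    · simp
  obtain ⟨P₁, hP₁, P₂, hP₂, hP12⟩ := Set.not_subsingleton_iff.mp hsub
  -- choose a positive root for each hyperplane in Q
  have hroot : ∀ P ∈ Q, ∃ α, α ∈ PhiPos (W := W) ρ ∧ P = hyp α := by
    intro P hP
    obtain ⟨α, hα, hPα⟩ := hQP hP
    exact ⟨α, hα, hPα⟩
  choose! rt hrt1 hrt2 using hroot
  have hav : ∀ P ∈ Q, ∀ P' ∈ Q, P ≠ P' → bform M (rt P) (rt P') = a := by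
    intro P hP P' hP' hne
    exact ha P hP P' hP' hne (rt P) (hrt1 P hP) (rt P') (hrt1 P' hP')
      (hrt2 P hP) (hrt2 P' hP')
  have hnorm : ∀ P ∈ Q, bform M (rt P) (rt P) = 1 := by
    intro P hP
    exact bform_root_self hρ (hrt1 P hP).1
  have hrtinj : ∀ P ∈ Q, ∀ P' ∈ Q, rt P = rt P' → P = P' := by
    intro P hP P' hP' he
    rw [hrt2 P hP, hrt2 P' hP', he]
  -- `a ≠ 1` thanks to the intersecting hypothesis
  have ha1 : a ≠ 1 := by
    intro ha1
    obtain ⟨f, hf⟩ := hint P₁ hP₁ P₂ hP₂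
    obtain ⟨⟨hf1, hf2⟩, hf3⟩ := hf
    have hfα : pair f (rt P₁) = 0 := by
      have := hrt2 P₁ hP₁ ▸ hf1
      exact this
    have hfβ : pair f (rt P₂) = 0 := by
      have := hrt2 P₂ hP₂ ▸ hf2
      exact this
    exact no_common_point_of_bform_one hρ π hπ (hrt1 P₁ hP₁) (hrt1 P₂ hP₂)
      (fun he => hP12 (hrtinj _ hP₁ _ hP₂ he)) (ha1 ▸ hav P₁ hP₁ P₂ hP₂ hP12)
      hfα hfβ hf3
  -- linear independence of the differences of roots
  set S' : Set (Set (B → ℝ)) := Q \ {P₁} with hS'def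
  have hS'Q : ∀ P : S', P.1 ∈ Q := fun P => P.2.1
  have hS'ne : ∀ P : S', P.1 ≠ P₁ := fun P => P.2.2
  set v : S' → (B → ℝ) := fun P => rt P.1 - rt P₁ with hvdef
  have hbv : ∀ P R : S', bform M (v P) (v R) = (1-a) + (if P = R then (1-a) else 0) := by
    intro P R
    rw [hvdef]
    simp only
    rw [bform_sub_left, bform_sub_right, bform_sub_right]
    rw [hav P.1 (hS'Q P) P₁ hP₁ (hS'ne P),
      show bform M (rt P₁) (rt R.1) = a from by
        rw [bform_symm]; exact hav R.1 (hS'Q R) P₁ hP₁ (hS'ne R),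
      hnorm P₁ hP₁]
    by_cases hPR : P = R
    · rw [if_pos hPR, hPR, hnorm R.1 (hS'Q R)]
      ring
    · rw [if_neg hPR,
        hav P.1 (hS'Q P) R.1 (hS'Q R)
          (fun he => hPR (Subtype.ext he))]
      ring
  have hv_li : LinearIndependent ℝ v := by
    rw [linearIndependent_iff]
    intro l hl
    set Ssum : ℝ := l.sum (fun _ c => c) with hSsum
    have hlP : ∀ P : S', l P = -Ssum := by
      intro P
      have h0 := congrArg (bformL M (v P)) hl
      rw [map_zero, Finsupp.linearCombination_apply, map_finsuppSum] at h0
      have hterm : ∀ R : S', ∀ c : ℝ, bformL M (v P) (c • v R)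
          = c * (1-a) + (if R = P then c * (1-a) else 0) := by
        intro R c
        rw [map_smul]
        show c * bform M (v P) (v R) = _
        rw [hbv P R]
        by_cases h : R = P
        · rw [if_pos h, if_pos h.symm]; ring
        · rw [if_neg h, if_neg (fun he => h he.symm)]; ring
      have h1 : l.sum (fun R c => bformL M (v P) (c • v R))
          = (1-a) * Ssum + (1-a) * l P := by
        have hc : (l.sum fun R c => bformL M (v P) (c • v R))
            = l.sum (fun R c => c * (1-a) + (if R = P then c * (1-a) else 0)) :=
          Finsupp.sum_congr (fun R _ => hterm R (l R))
        rw [hc, Finsupp.sum_add]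
        congr 1
        · rw [hSsum, Finsupp.sum, Finsupp.sum, Finset.mul_sum]
          exact Finset.sum_congr rfl (fun R _ => by ring)
        · rw [Finsupp.sum_ite_eq']
          by_cases hmem : P ∈ l.support
          · rw [if_pos hmem]; ring
          · rw [if_neg hmem]
            have : l P = 0 := Finsupp.notMem_support_iff.mp hmem
            rw [this]; ring
      rw [h1] at h0
      have hfac : (1-a) * (Ssum + l P) = 0 := by linarith
      have h1a : (1:ℝ) - a ≠ 0 := fun h => ha1 (by linarith)
      have := mul_eq_zero.mp hfac
      rcases this with h | h
      · exact absurd h h1a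
      · linarith
    have hS0 : Ssum = 0 := by
      have hsum2 : Ssum = ∑ P ∈ l.support, l P := by
        rw [hSsum, Finsupp.sum]
      have hsum3 : Ssum = ∑ _P ∈ l.support, (-Ssum) := by
        rw [hsum2]
        exact Finset.sum_congr rfl (fun P _ => hlP P)
      rw [Finset.sum_const, nsmul_eq_mul] at hsum3
      rcases Nat.eq_zero_or_pos l.support.card with h0 | hpos
      · rw [h0] at hsum3; simpa using hsum3
      · have : Ssum * (1 + l.support.card) = 0 := by
          have : (l.support.card : ℝ) * (-Ssum) = Ssum := hsum3.symm
          nlinarith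
        have hcard : (0:ℝ) < 1 + l.support.card := by
            have := Nat.cast_nonneg (α := ℝ) l.support.card; linarith
        rcases mul_eq_zero.mp this with h | h
        · exact h
        · linarith
    ext P
    rw [hlP P, hS0, neg_zero]
    rfl
  -- conclude
  haveI : Module.Finite ℝ (B → ℝ) := inferInstance
  haveI hfinS' : Finite S' := hv_li.finite
  have hS'fin : S'.Finite := S'.toFinite
  have hQsub : Q ⊆ insert P₁ S' := by
    intro x hx
    by_cases hx1 : x = P₁
    · exact hx1 ▸ Set.mem_insert _ _
    · exact Set.mem_insert_of_mem _ ⟨hx, hx1⟩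
  have hQfin : Q.Finite := (hS'fin.insert P₁).subset hQsub
  refine ⟨hQfin, ?_⟩
  haveI : Fintype S' := hS'fin.fintype
  have hcard : Fintype.card S' ≤ Fintype.card B := by
    have := hv_li.fintype_card_le_finrank
    rwa [finrank_pi_real] at this
  have hncard : S'.ncard ≤ Fintype.card B := by
    rw [← Nat.card_coe_set_eq, Nat.card_eq_fintype_card]
    exact hcard
  calc Q.ncard ≤ (insert P₁ S').ncard :=
        Set.ncard_le_ncard hQsub (hS'fin.insert P₁)
    _ ≤ S'.ncard + 1 := Set.ncard_insert_le _ _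
    _ ≤ Fintype.card B + 1 := by omega

end PaperBound
end
end

section
/- Let P, H ∈ 𝔓 and f, g ∈ U° with f, g ∉ P ∪ H. Suppose: (1) f and g lie on the same side of H (i.e., ⟨f, α_H⟩⟨g, α_H⟩ > 0); (2) P separates f and g; (3) P separates f and σ_H·f. Then g and σ_H·g lie on the same side of P (i.e., ⟨g, α_P⟩⟨σ_H·g, α_P⟩ > 0). -/
noncomputable section

namespace PaperBound

variable {B : Type} {W : Type} [Group W]

lemma pair_sub_smul [Fintype B] (f u v : B → ℝ) (c : ℝ) :
    pair f (u - c • v) = pair f u - c * pair f v := by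
  unfold pair
  rw [Finset.mul_sum, ← Finset.sum_sub_distrib]
  exact Finset.sum_congr rfl fun i _ => by simp [mul_sub]; ring

lemma sign_lemma (a b u v c : ℝ) (hab : a * b < 0) (huv : 0 < u * v)
    (h3 : a * (a - c * u) < 0) : 0 < b * (b - c * v) := by
  have ha : a ≠ 0 := fun h => by simp [h] at hab
  have hb : b ≠ 0 := fun h => by simp [h] at hab
  have hu : u ≠ 0 := fun h => by simp [h] at huv
  have hcua : a * a < c * u * a := by nlinarith
  have ha2 : 0 < a * a := mul_self_pos.2 ha
  nlinarith [mul_neg_of_pos_of_neg (lt_trans ha2 hcua) (mul_neg_of_neg_of_pos hab huv),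
    mul_pos ha2 (mul_self_pos.2 hu), mul_self_pos.2 hb,
    mul_pos (mul_pos ha2 (mul_self_pos.2 hu)) (mul_self_pos.2 hb)]

/-- let `P = H_{α_P}`, `H = H_{α_H} ∈ 𝔓` with `α_H = w·α_i` and associated
reflection `σ_H = w s_i w⁻¹`. If `f, g ∈ U°` lie off `P ∪ H`, on the same side of `H`,
on different sides of `P`, and `P` separates `f` from `σ_H·f`, then `g` and `σ_H·g` lie
on the same side of `P`. -/
theorem statement10 [Fintype B] [DecidableEq B] {M : CoxeterMatrix B}
    (cs : CoxeterSystem M W) (ρ π : W →* (B → ℝ) ≃ₗ[ℝ] (B → ℝ))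
    (hρ : IsGeomRep M cs ρ) (hπ : IsContraRep ρ π)
    (αP αH : B → ℝ) (hαP : αP ∈ PhiPos ρ) (hαH : αH ∈ PhiPos ρ)
    (w : W) (i : B) (hw : αH = ρ w (sroot i))
    (f g : B → ℝ)
    (hf : f ∈ interior (titsCone π)) (hg : g ∈ interior (titsCone π))
    (hf' : f ∉ hyp αP ∪ hyp αH) (hg' : g ∉ hyp αP ∪ hyp αH)
    (h1 : 0 < pair f αH * pair g αH)
    (h2 : SepPt αP f g)
    (h3 : SepPt αP f (π (w * cs.simple i * w⁻¹) f)) :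
    0 < pair g αP * pair (π (w * cs.simple i * w⁻¹) g) αP := by
  classical
  set σ : W := w * cs.simple i * w⁻¹ with hσdef
  have hmul : ∀ (a b : W) (x : B → ℝ), ρ (a * b) x = ρ a (ρ b x) := fun a b x => by
    rw [map_mul]; rfl
  set c : ℝ := 2 * bform M (sroot i) (ρ w⁻¹ αP) with hc
  have hρσ : ρ σ αP = αP - c • αH := by
    rw [hσdef, hmul, hmul, hρ i (ρ w⁻¹ αP), map_sub, map_smul, ← hmul,
      mul_inv_cancel, hw]
    simp [hc, map_inv]
  have hσ2 : σ * σ = 1 := by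
    have h : σ * σ = w * (cs.simple i * cs.simple i) * w⁻¹ := by rw [hσdef]; group
    rw [h, cs.simple_mul_simple_self, mul_one, mul_inv_cancel]
  have hpair : ∀ x : B → ℝ, pair (π σ x) αP = pair x αP - c * pair x αH := by
    intro x
    have h0 : ρ σ (ρ σ αP) = αP := by rw [← hmul, hσ2, map_one]; rfl
    have h1' := hπ σ x (ρ σ αP)
    rw [h0] at h1'
    rw [h1', hρσ, pair_sub_smul]
  unfold SepPt at h2 h3
  rw [hpair f] at h3
  rw [hpair g]
  exact sign_lemma _ _ _ _ _ h2 h1 h3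

end PaperBound
end
end
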